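/- Suppose the stacked N × N matrix M has rank N. Then C1 ∩ C2 = {0}, C1 + C2 = ker M3, and dim (ker M3) = K1 + K2; that is, the global code C is the internal direct sum of the two subcodes C1 and C2. -/

import Mathlib

open Matrix LinearMap Module

lemma fk_aux {m : Type*} [Fintype m] {N : ℕ} (A : Matrix m (Fin N) (ZMod 2)) :
    A.rank + Module.finrank (ZMod 2) ↥(LinearMap.ker A.mulVecLin) = N := by
  have := LinearMap.finrank_range_add_finrank_ker A.mulVecLin
  simpa [Matrix.rank] using this

lemma ker_fromRows_aux {m₁ m₂ : Type*} {N : ℕ} (A : Matrix m₁ (Fin N) (ZMod 2))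
    (B : Matrix m₂ (Fin N) (ZMod 2)) :
    LinearMap.ker (A.fromRows B).mulVecLin = LinearMap.ker A.mulVecLin ⊓ LinearMap.ker B.mulVecLin := by
  ext x
  simp only [LinearMap.mem_ker, Submodule.mem_inf, Matrix.mulVecLin_apply,
    Matrix.fromRows_mulVec]
  constructor
  · intro h
    constructor
    · funext i; exact congrFun h (Sum.inl i)
    · funext i; exact congrFun h (Sum.inr i)
  · rintro ⟨h1, h2⟩
    funext i
    cases i with
    | inl i => exact congrFun h1 i
    | inr i => exact congrFun h2 i

/-- If the stacked N × N matrix M = [M1; M2; M3] over F2 has rank N, then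
C1 ∩ C2 = {0}, C1 + C2 = ker M3, and dim (ker M3) = K1 + K2; i.e. the global code
C = ker M3 is the internal direct sum of the subcodes C1 = ker M1 ∩ ker M3 and
C2 = ker M2 ∩ ker M3. -/
theorem stmt_1 (N K1 K2 : ℕ) (hK : K1 + K2 ≤ N)
    (M1 : Matrix (Fin K2) (Fin N) (ZMod 2))
    (M2 : Matrix (Fin K1) (Fin N) (ZMod 2))
    (M3 : Matrix (Fin (N - K1 - K2)) (Fin N) (ZMod 2))
    (hrank : (Matrix.fromRows M1 (Matrix.fromRows M2 M3)).rank = N) :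
    (LinearMap.ker M1.mulVecLin ⊓ LinearMap.ker M3.mulVecLin) ⊓
      (LinearMap.ker M2.mulVecLin ⊓ LinearMap.ker M3.mulVecLin) = ⊥ ∧
    (LinearMap.ker M1.mulVecLin ⊓ LinearMap.ker M3.mulVecLin) ⊔
      (LinearMap.ker M2.mulVecLin ⊓ LinearMap.ker M3.mulVecLin) =
      LinearMap.ker M3.mulVecLin ∧
    Module.finrank (ZMod 2) ↥(LinearMap.ker M3.mulVecLin) = K1 + K2 := by
  set k1 := LinearMap.ker M1.mulVecLin
  set k2 := LinearMap.ker M2.mulVecLin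
  set k3 := LinearMap.ker M3.mulVecLin
  -- the triple intersection is ⊥
  have hMk : LinearMap.ker (Matrix.fromRows M1 (Matrix.fromRows M2 M3)).mulVecLin
      = k1 ⊓ (k2 ⊓ k3) := by
    rw [ker_fromRows_aux, ker_fromRows_aux]
  have hfkM := fk_aux (Matrix.fromRows M1 (Matrix.fromRows M2 M3))
  rw [hrank, hMk] at hfkM
  have htriple : k1 ⊓ (k2 ⊓ k3) = ⊥ := by
    have h0 : Module.finrank (ZMod 2) ↥(k1 ⊓ (k2 ⊓ k3)) = 0 := by omega
    exact Submodule.finrank_eq_zero.mp h0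
  -- C1 ⊓ C2 = ⊥
  have hinf : (k1 ⊓ k3) ⊓ (k2 ⊓ k3) = ⊥ := by
    rw [eq_bot_iff, ← htriple]
    intro x hx
    simp only [Submodule.mem_inf] at hx ⊢
    tauto
  -- dimensions: lower bounds
  have hC1 : LinearMap.ker (Matrix.fromRows M1 M3).mulVecLin = k1 ⊓ k3 := ker_fromRows_aux _ _
  have hC2 : LinearMap.ker (Matrix.fromRows M2 M3).mulVecLin = k2 ⊓ k3 := ker_fromRows_aux _ _
  have hfk1 := fk_aux (Matrix.fromRows M1 M3)
  have hfk2 := fk_aux (Matrix.fromRows M2 M3)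
  have hfk3 : M3.rank + Module.finrank (ZMod 2) ↥k3 = N := fk_aux M3
  rw [hC1] at hfk1
  rw [hC2] at hfk2
  have hr1 := Matrix.rank_le_card_height (Matrix.fromRows M1 M3)
  have hr2 := Matrix.rank_le_card_height (Matrix.fromRows M2 M3)
  have hr3 := Matrix.rank_le_card_height M3
  simp only [Fintype.card_sum, Fintype.card_fin] at hr1 hr2 hr3
  -- upper bounds via injectivity
  have hbot : ∀ x : Fin N → ZMod 2, x ∈ k1 → x ∈ k2 → x ∈ k3 → x = 0 := by
    intro x h1 h2 h3
    have : x ∈ k1 ⊓ (k2 ⊓ k3) := ⟨h1, h2, h3⟩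
    rw [htriple] at this
    simpa using this
  have hub3 : Module.finrank (ZMod 2) ↥k3 ≤ K2 + K1 := by
    have hinj : Function.Injective
        ⇑((M1.mulVecLin.prod M2.mulVecLin).domRestrict k3) := by
      rw [← LinearMap.ker_eq_bot, eq_bot_iff]
      rintro ⟨x, hx3⟩ hx
      simp only [LinearMap.mem_ker, LinearMap.domRestrict_apply, LinearMap.prod_apply,
        Function.prod, Prod.mk_eq_zero] at hx
      simpa [Subtype.ext_iff] using hbot x hx.1 hx.2 hx3
    have := LinearMap.finrank_le_finrank_of_injective hinj
    simpa using this
  have hub1 : Module.finrank (ZMod 2) ↥(k1 ⊓ k3) ≤ K1 := by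
    have hinj : Function.Injective ⇑(M2.mulVecLin.domRestrict (k1 ⊓ k3)) := by
      rw [← LinearMap.ker_eq_bot, eq_bot_iff]
      rintro ⟨x, hx1, hx3⟩ hx
      simp only [LinearMap.mem_ker, LinearMap.domRestrict_apply] at hx
      simpa [Subtype.ext_iff] using hbot x hx1 hx hx3
    have := LinearMap.finrank_le_finrank_of_injective hinj
    simpa using this
  have hub2 : Module.finrank (ZMod 2) ↥(k2 ⊓ k3) ≤ K2 := by
    have hinj : Function.Injective ⇑(M1.mulVecLin.domRestrict (k2 ⊓ k3)) := by
      rw [← LinearMap.ker_eq_bot, eq_bot_iff]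
      rintro ⟨x, hx2, hx3⟩ hx
      simp only [LinearMap.mem_ker, LinearMap.domRestrict_apply] at hx
      simpa [Subtype.ext_iff] using hbot x hx hx2 hx3
    have := LinearMap.finrank_le_finrank_of_injective hinj
    simpa using this
  have d1 : Module.finrank (ZMod 2) ↥(k1 ⊓ k3) = K1 := by omega
  have d2 : Module.finrank (ZMod 2) ↥(k2 ⊓ k3) = K2 := by omega
  have d3 : Module.finrank (ZMod 2) ↥k3 = K1 + K2 := by omega
  refine ⟨hinf, ?_, d3⟩
  have hle : (k1 ⊓ k3) ⊔ (k2 ⊓ k3) ≤ k3 := sup_le inf_le_right inf_le_right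
  have hdsup := Submodule.finrank_sup_add_finrank_inf_eq (k1 ⊓ k3) (k2 ⊓ k3)
  rw [hinf] at hdsup
  simp only [finrank_bot, add_zero] at hdsup
  exact Submodule.eq_of_le_of_finrank_le hle (by omega)
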